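/- Let X and Y be locally compact Hausdorff spaces and let T : C₀(X)⁺ → C₀(Y)⁺ be a bijection such that for all f, g ∈ C₀(X)⁺ one has ‖T(f+g)‖ = ‖T(f)+T(g)‖ and ‖T(f·g)‖ = ‖T(f)·T(g)‖. Define T̃ : C₀(X) → C₀(Y) by T̃(f) = T(f₊) − T(f₋). Then T̃ is an isometry: ‖T̃(f)‖ = ‖f‖ for every f ∈ C₀(X). -/

import Mathlib

open scoped ZeroAtInfty
open Filter ZeroAtInftyContinuousMap

/-- The positive part `f₊ = max (f, 0)` of a real-valued continuous function
vanishing at infinity. -/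
noncomputable def posPart {X : Type*} [TopologicalSpace X] (f : C₀(X, ℝ)) : C₀(X, ℝ) :=
  ⟨⟨fun x => max (f x) 0, (map_continuous f).max continuous_const⟩, by
    simpa using (zero_at_infty f).max
      (tendsto_const_nhds : Tendsto (fun _ : X => (0 : ℝ)) (cocompact X) (nhds 0))⟩

/-- The negative part `f₋ = max (-f, 0)`. -/
noncomputable def negPart {X : Type*} [TopologicalSpace X] (f : C₀(X, ℝ)) : C₀(X, ℝ) :=
  posPart (-f)

/-- The extension `T̃(f) = T(f₊) - T(f₋)` of a map between positive cones. -/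
noncomputable def tildeT {X Y : Type*} [TopologicalSpace X] [TopologicalSpace Y]
    (T : C₀(X, ℝ) → C₀(Y, ℝ)) (f : C₀(X, ℝ)) : C₀(Y, ℝ) :=
  T (posPart f) - T (negPart f)

section Core
variable {X Y : Type*}
    [TopologicalSpace X] [LocallyCompactSpace X] [T2Space X]
    [TopologicalSpace Y] [LocallyCompactSpace Y] [T2Space Y]

lemma aux_abs_apply_le_norm {Z : Type*} [TopologicalSpace Z] (f : C₀(Z, ℝ)) (x : Z) :
    |f x| ≤ ‖f‖ := by
  rw [← norm_toBCF_eq_norm]; exact f.toBCF.norm_coe_le_norm x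

lemma aux_norm_le_iff {Z : Type*} [TopologicalSpace Z] (f : C₀(Z, ℝ)) {C : ℝ} (hC : 0 ≤ C) :
    ‖f‖ ≤ C ↔ ∀ x, |f x| ≤ C := by
  rw [← norm_toBCF_eq_norm]; exact f.toBCF.norm_le hC

lemma aux_norm_add_left_le {Z : Type*} [TopologicalSpace Z] (u v : C₀(Z, ℝ))
    (hu : ∀ y, 0 ≤ u y) (hv : ∀ y, 0 ≤ v y) : ‖u‖ ≤ ‖u + v‖ := by
  rw [aux_norm_le_iff u (norm_nonneg _)]
  intro x
  calc |u x| = u x := abs_of_nonneg (hu x)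
    _ ≤ u x + v x := le_add_of_nonneg_right (hv x)
    _ = |(u + v) x| := by
        rw [ZeroAtInftyContinuousMap.add_apply, abs_of_nonneg (add_nonneg (hu x) (hv x))]
    _ ≤ ‖u + v‖ := aux_abs_apply_le_norm _ x

lemma aux_norm_mul_self {Z : Type*} [TopologicalSpace Z] (f : C₀(Z, ℝ)) :
    ‖f * f‖ = ‖f‖ * ‖f‖ := by
  apply le_antisymm (norm_mul_le f f)
  have h1 : ‖f‖ ≤ Real.sqrt ‖f * f‖ := by
    rw [aux_norm_le_iff _ (Real.sqrt_nonneg _)]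
    intro x
    rw [show |f x| = Real.sqrt (f x * f x) by rw [Real.sqrt_mul_self_eq_abs]]
    apply Real.sqrt_le_sqrt
    calc f x * f x = |(f * f) x| := by
          rw [ZeroAtInftyContinuousMap.mul_apply, abs_mul_self]
      _ ≤ ‖f * f‖ := aux_abs_apply_le_norm _ x
  calc ‖f‖ * ‖f‖ ≤ Real.sqrt ‖f * f‖ * Real.sqrt ‖f * f‖ :=
        mul_le_mul h1 h1 (norm_nonneg _) (Real.sqrt_nonneg _)
    _ = ‖f * f‖ := Real.mul_self_sqrt (norm_nonneg _)


lemma aux_norm_sub_eq_max {Z : Type*} [TopologicalSpace Z] (u v : C₀(Z, ℝ))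
    (hu : ∀ y, 0 ≤ u y) (hv : ∀ y, 0 ≤ v y)
    (h : u * v = 0) : ‖u - v‖ = max ‖u‖ ‖v‖ := by
  have hpt : ∀ x, u x * v x = 0 := by
    intro x
    have := congrArg (fun g : C₀(Z, ℝ) => g x) h
    simpa using this
  apply le_antisymm
  · rw [aux_norm_le_iff _ (le_max_of_le_left (norm_nonneg u))]
    intro x
    rcases mul_eq_zero.mp (hpt x) with h0 | h0
    · rw [ZeroAtInftyContinuousMap.sub_apply, h0, zero_sub, abs_neg, abs_of_nonneg (hv x)]
      exact le_max_of_le_right ((le_abs_self _).trans (aux_abs_apply_le_norm v x))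
    · rw [ZeroAtInftyContinuousMap.sub_apply, h0, sub_zero, abs_of_nonneg (hu x)]
      exact le_max_of_le_left ((le_abs_self _).trans (aux_abs_apply_le_norm u x))
  · have h1 : ‖u‖ ≤ ‖u - v‖ := by
      rw [aux_norm_le_iff _ (norm_nonneg _)]
      intro x
      rcases mul_eq_zero.mp (hpt x) with h0 | h0
      · rw [abs_of_nonneg (hu x), h0]
        exact (norm_nonneg _)
      · rw [abs_of_nonneg (hu x)]
        have heq : u x = |(u - v) x| := by
          rw [ZeroAtInftyContinuousMap.sub_apply, h0, sub_zero, abs_of_nonneg (hu x)]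
        rw [heq]
        exact aux_abs_apply_le_norm _ x
    have h2 : ‖v‖ ≤ ‖u - v‖ := by
      rw [aux_norm_le_iff _ (norm_nonneg _)]
      intro x
      rcases mul_eq_zero.mp (hpt x) with h0 | h0
      · have heq : v x = |(u - v) x| := by
          rw [ZeroAtInftyContinuousMap.sub_apply, h0, zero_sub, abs_neg, abs_of_nonneg (hv x)]
        rw [abs_of_nonneg (hv x), heq]
        exact aux_abs_apply_le_norm _ x
      · rw [abs_of_nonneg (hv x), h0]
        exact (norm_nonneg _)
    exact max_le h1 h2

lemma aux_ratio {a c : ℝ} (hc : 0 < c)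
    (h : ∀ j : ℕ, a ^ (2 ^ j) ≤ 4 * c ^ (2 ^ j)) : a ≤ c := by
  by_contra hlt
  push_neg at hlt
  have hr : 1 < a / c := (one_lt_div hc).mpr hlt
  obtain ⟨n, hn⟩ := pow_unbounded_of_one_lt (4 : ℝ) hr
  have h2n : (a / c) ^ n ≤ (a / c) ^ (2 ^ n) :=
    pow_le_pow_right₀ hr.le (Nat.lt_two_pow_self (n := n)).le
  have hc2 : (0:ℝ) < c ^ (2 ^ n) := by positivity
  have := h n
  simp only [div_pow] at h2n hn
  have h4 : 4 * c ^ (2 ^ n) < a ^ (2 ^ n) := by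
    have := (lt_div_iff₀ hc2).mp (hn.trans_le h2n)
    linarith
  linarith

theorem norm_T_eq
    (T : C₀(X, ℝ) → C₀(Y, ℝ))
    (hbij : Set.BijOn T {f : C₀(X, ℝ) | ∀ x, 0 ≤ f x} {g : C₀(Y, ℝ) | ∀ y, 0 ≤ g y})
    (hadd : ∀ f g : C₀(X, ℝ), (∀ x, 0 ≤ f x) → (∀ x, 0 ≤ g x) →
      ‖T (f + g)‖ = ‖T f + T g‖)
    (hmul : ∀ f g : C₀(X, ℝ), (∀ x, 0 ≤ f x) → (∀ x, 0 ≤ g x) →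
      ‖T (f * g)‖ = ‖T f * T g‖) :
    ∀ f : C₀(X, ℝ), (∀ x, 0 ≤ f x) → ‖T f‖ = ‖f‖ := by
  have cone0 : ∀ x, 0 ≤ (0 : C₀(X, ℝ)) x := fun x => le_of_eq rfl
  have hTnn : ∀ f : C₀(X, ℝ), (∀ x, 0 ≤ f x) → ∀ y, 0 ≤ T f y := fun f hf =>
    hbij.mapsTo hf
  -- T 0 = 0
  have hT0 : T 0 = 0 := by
    have h := hadd 0 0 cone0 cone0
    rw [add_zero] at h
    have h2 : T 0 + T 0 = (2 : ℝ) • T 0 := (two_smul ℝ (T 0)).symm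
    rw [h2, norm_smul (2 : ℝ) (T 0)] at h
    simp only [Real.norm_ofNat] at h
    have : ‖T 0‖ = 0 := by linarith
    exact norm_eq_zero.mp this
  -- monotonicity
  have hmono : ∀ f g : C₀(X, ℝ), (∀ x, 0 ≤ f x) → (∀ x, f x ≤ g x) → ‖T f‖ ≤ ‖T g‖ := by
    intro f g hf hle
    have hgf : ∀ x, 0 ≤ (g - f) x := fun x => by
      rw [ZeroAtInftyContinuousMap.sub_apply]; exact sub_nonneg.mpr (hle x)
    calc ‖T f‖ ≤ ‖T f + T (g - f)‖ :=
          aux_norm_add_left_le _ _ (hTnn f hf) (hTnn _ hgf)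
      _ = ‖T (f + (g - f))‖ := (hadd f (g - f) hf hgf).symm
      _ = ‖T g‖ := by rw [add_sub_cancel]
  -- doubling
  have h2 : ∀ f : C₀(X, ℝ), (∀ x, 0 ≤ f x) → ‖T ((2 : ℝ) • f)‖ = 2 * ‖T f‖ := by
    intro f hf
    rw [show (2 : ℝ) • f = f + f from two_smul ℝ f, hadd f f hf hf,
      show T f + T f = (2 : ℝ) • T f from (two_smul ℝ (T f)).symm,
      norm_smul (2 : ℝ) (T f)]
    simp
  have cone_smul : ∀ (c : ℝ), 0 ≤ c → ∀ f : C₀(X, ℝ), (∀ x, 0 ≤ f x) →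
      ∀ x, 0 ≤ (c • f) x := by
    intro c hc f hf x
    rw [ZeroAtInftyContinuousMap.smul_apply]
    exact mul_nonneg hc (hf x)
  -- zpow scaling
  have hzpow : ∀ (k : ℤ) (f : C₀(X, ℝ)), (∀ x, 0 ≤ f x) →
      ‖T ((2 : ℝ) ^ k • f)‖ = 2 ^ k * ‖T f‖ := by
    intro k
    induction k using Int.induction_on with
    | zero => intro f hf; simp
    | succ i ih =>
        intro f hf
        have hsp : ((2 : ℝ) ^ ((i : ℤ) + 1)) • f = (2 : ℝ) • ((2 : ℝ) ^ (i : ℤ) • f) := by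
          rw [smul_smul]
          congr 1
          rw [zpow_add_one₀ (by norm_num : (2:ℝ) ≠ 0)]
          ring
        rw [hsp, h2 _ (cone_smul _ (by positivity) f hf), ih f hf,
          zpow_add_one₀ (by norm_num : (2:ℝ) ≠ 0)]
        ring
    | pred i ih =>
        intro f hf
        have hsp : ((2 : ℝ) ^ (-(i : ℤ))) • f = (2 : ℝ) • ((2 : ℝ) ^ (-(i : ℤ) - 1) • f) := by
          rw [smul_smul]
          congr 1
          rw [zpow_sub_one₀ (by norm_num : (2:ℝ) ≠ 0)]
          ring
        have := h2 _ (cone_smul ((2:ℝ) ^ (-(i:ℤ) - 1)) (by positivity) f hf)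
        rw [← hsp, ih f hf] at this
        have h2pos : (0:ℝ) < 2 := by norm_num
        have : ‖T ((2:ℝ) ^ (-(i:ℤ) - 1) • f)‖ = 2 ^ (-(i:ℤ)) * ‖T f‖ / 2 := by linarith
        rw [this, zpow_sub_one₀ (by norm_num : (2:ℝ) ≠ 0)]
        ring
  -- comparison with 1
  have hle1 : ∀ f : C₀(X, ℝ), (∀ x, 0 ≤ f x) → ‖f‖ ≤ 1 → ‖T f‖ ≤ 1 := by
    intro f hf hnorm
    have hconeff : ∀ x, 0 ≤ (f * f) x := fun x => by
      rw [ZeroAtInftyContinuousMap.mul_apply]; exact mul_nonneg (hf x) (hf x)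
    have hffle : ∀ x, (f * f) x ≤ f x := by
      intro x
      rw [ZeroAtInftyContinuousMap.mul_apply]
      have h1 : f x ≤ 1 := le_trans (le_abs_self _) (le_trans (aux_abs_apply_le_norm f x) hnorm)
      exact mul_le_of_le_one_right (hf x) h1
    have hm := hmono (f * f) f hconeff hffle
    rw [hmul f f hf hf, aux_norm_mul_self] at hm
    nlinarith [norm_nonneg (T f)]
  have hge1 : ∀ f : C₀(X, ℝ), (∀ x, 0 ≤ f x) → 1 < ‖f‖ → 1 ≤ ‖T f‖ := by
    intro f hf hnorm
    have hex : ∃ x, 1 < f x := by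
      by_contra hc
      push_neg at hc
      have : ‖f‖ ≤ 1 := (aux_norm_le_iff f zero_le_one).mpr
        (fun x => abs_le.mpr ⟨by linarith [hf x], hc x⟩)
      linarith
    obtain ⟨x₀, hx₀⟩ := hex
    set V : Set X := {x | 1 < f x} with hVdef
    have hV : IsOpen V := isOpen_lt continuous_const (map_continuous f)
    obtain ⟨K₀, hK₀c, hx₀K, hK₀V⟩ := exists_compact_subset hV hx₀
    obtain ⟨e, heK, heVc, hecs, heIcc⟩ :=
      exists_continuous_one_zero_of_isCompact hK₀c hV.isClosed_compl
        (Set.disjoint_left.mpr fun x hx hxc => hxc (hK₀V hx))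
    obtain ⟨e', he'1, he'0, he'cs, he'Icc⟩ :=
      exists_continuous_one_zero_of_isCompact (isCompact_singleton : IsCompact {x₀})
        isOpen_interior.isClosed_compl
        (Set.disjoint_left.mpr fun x hx hxc => hxc (by rwa [Set.mem_singleton_iff.mp hx]))
    set E : C₀(X, ℝ) := ⟨e, hecs.is_zero_at_infty⟩ with hEdef
    set E' : C₀(X, ℝ) := ⟨e', he'cs.is_zero_at_infty⟩ with hE'def
    have hEapp : ∀ x, E x = e x := fun x => rfl
    have hE'app : ∀ x, E' x = e' x := fun x => rfl
    have coneE : ∀ x, 0 ≤ E x := fun x => (heIcc x).1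
    have coneE' : ∀ x, 0 ≤ E' x := fun x => (he'Icc x).1
    have hEf : ∀ x, E x ≤ f x := by
      intro x
      by_cases hx : x ∈ V
      · exact le_trans (heIcc x).2 (le_of_lt hx)
      · rw [hEapp, heVc hx]
        exact le_trans zero_le_one (le_of_lt hx₀) |>.trans (le_of_eq rfl) |> fun _ => hf x
    have hEE' : E * E' = E' := by
      ext x
      rw [ZeroAtInftyContinuousMap.mul_apply]
      by_cases h0 : e' x = 0
      · rw [hE'app, h0, mul_zero]
      · have hxK : x ∈ interior K₀ := by
          by_contra hxK
          exact h0 (he'0 hxK)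
        have : e x = 1 := heK (interior_subset hxK)
        rw [hEapp, hE'app, this, one_mul]
    have hE'ne : E' ≠ 0 := by
      intro h
      have : E' x₀ = 0 := by rw [h]; rfl
      rw [hE'app, he'1 rfl] at this
      exact one_ne_zero this
    have hTE'pos : 0 < ‖T E'‖ := by
      rw [norm_pos_iff]
      intro h
      exact hE'ne (hbij.injOn coneE' cone0 (by rw [h, hT0]))
    have hTE : 1 ≤ ‖T E‖ := by
      have hm := hmul E E' coneE coneE'
      rw [hEE'] at hm
      have : ‖T E'‖ ≤ ‖T E‖ * ‖T E'‖ := hm.trans_le (norm_mul_le _ _)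
      nlinarith
    exact le_trans hTE (hmono E f coneE hEf)
  -- scaled comparisons
  have h2ne : (2 : ℝ) ≠ 0 := by norm_num
  have hsmul_eq : ∀ (k : ℤ) (f : C₀(X, ℝ)), (2 : ℝ) ^ k • ((2 : ℝ) ^ (-k) • f) = f := by
    intro k f
    rw [smul_smul, ← zpow_add₀ h2ne, add_neg_cancel, zpow_zero, one_smul]
  have hnorm_smul : ∀ (k : ℤ) (f : C₀(X, ℝ)), ‖(2 : ℝ) ^ (-k) • f‖ = (2:ℝ) ^ (-k) * ‖f‖ := by
    intro k f
    rw [norm_smul ((2:ℝ) ^ (-k)) f, Real.norm_eq_abs, abs_of_pos (zpow_pos (by norm_num) _)]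
  have hlez : ∀ (k : ℤ) (f : C₀(X, ℝ)), (∀ x, 0 ≤ f x) → ‖f‖ ≤ 2 ^ k → ‖T f‖ ≤ 2 ^ k := by
    intro k f hf hle
    have hconeg := cone_smul ((2:ℝ) ^ (-k)) (le_of_lt (zpow_pos (by norm_num) _)) f hf
    have hgnorm : ‖(2 : ℝ) ^ (-k) • f‖ ≤ 1 := by
      rw [hnorm_smul]
      calc (2:ℝ) ^ (-k) * ‖f‖ ≤ (2:ℝ) ^ (-k) * 2 ^ k :=
            mul_le_mul_of_nonneg_left hle (le_of_lt (zpow_pos (by norm_num) _))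
        _ = 1 := by rw [← zpow_add₀ h2ne, neg_add_cancel, zpow_zero]
    have := hle1 _ hconeg hgnorm
    have hT := hzpow k _ hconeg
    rw [hsmul_eq] at hT
    calc ‖T f‖ = 2 ^ k * ‖T ((2:ℝ) ^ (-k) • f)‖ := hT
      _ ≤ 2 ^ k * 1 := mul_le_mul_of_nonneg_left this (le_of_lt (zpow_pos (by norm_num) _))
      _ = 2 ^ k := mul_one _
  have hgez : ∀ (k : ℤ) (f : C₀(X, ℝ)), (∀ x, 0 ≤ f x) → (2:ℝ) ^ k < ‖f‖ → (2:ℝ) ^ k ≤ ‖T f‖ := by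
    intro k f hf hlt
    have hconeg := cone_smul ((2:ℝ) ^ (-k)) (le_of_lt (zpow_pos (by norm_num) _)) f hf
    have hgnorm : 1 < ‖(2 : ℝ) ^ (-k) • f‖ := by
      rw [hnorm_smul]
      have := mul_lt_mul_of_pos_left hlt (zpow_pos (by norm_num : (0:ℝ) < 2) (-k))
      rwa [← zpow_add₀ h2ne, neg_add_cancel, zpow_zero] at this
    have := hge1 _ hconeg hgnorm
    have hT := hzpow k _ hconeg
    rw [hsmul_eq] at hT
    calc (2:ℝ) ^ k = 2 ^ k * 1 := (mul_one _).symm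
      _ ≤ 2 ^ k * ‖T ((2:ℝ) ^ (-k) • f)‖ :=
            mul_le_mul_of_nonneg_left this (le_of_lt (zpow_pos (by norm_num) _))
      _ = ‖T f‖ := hT.symm
  -- iterated squaring
  have hpow : ∀ (j : ℕ) (f : C₀(X, ℝ)), (∀ x, 0 ≤ f x) →
      ∃ g : C₀(X, ℝ), (∀ x, 0 ≤ g x) ∧ ‖g‖ = ‖f‖ ^ (2 ^ j) ∧ ‖T g‖ = ‖T f‖ ^ (2 ^ j) := by
    intro j
    induction j with
    | zero => intro f hf; exact ⟨f, hf, by simp, by simp⟩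
    | succ j ih =>
        intro f hf
        obtain ⟨g, hg, hgn, hgT⟩ := ih f hf
        refine ⟨g * g, fun x => by
          rw [ZeroAtInftyContinuousMap.mul_apply]; exact mul_nonneg (hg x) (hg x), ?_, ?_⟩
        · rw [aux_norm_mul_self, hgn, pow_succ, pow_mul, sq]
        · rw [hmul g g hg hg, aux_norm_mul_self, hgT, pow_succ, pow_mul, sq]
  -- conclusion
  intro f hf
  rcases eq_or_lt_of_le (norm_nonneg f) with hc0 | hcpos
  · rw [show f = 0 from norm_eq_zero.mp hc0.symm, hT0, norm_zero, norm_zero]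
  have claim1 : ∀ j : ℕ, ‖T f‖ ^ (2 ^ j) ≤ 4 * ‖f‖ ^ (2 ^ j) := by
    intro j
    obtain ⟨g, hg, hgn, hgT⟩ := hpow j f hf
    have hcj : (0:ℝ) < ‖f‖ ^ (2 ^ j) := by positivity
    obtain ⟨n, hn1, hn2⟩ := exists_mem_Ico_zpow hcj one_lt_two
    have hle := hlez (n + 1) g hg (by rw [hgn]; exact hn2.le)
    rw [hgT] at hle
    calc ‖T f‖ ^ (2 ^ j) ≤ (2:ℝ) ^ (n + 1) := hle
      _ = 2 * 2 ^ n := by rw [zpow_add_one₀ h2ne]; ring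
      _ ≤ 2 * ‖f‖ ^ (2 ^ j) := by nlinarith
      _ ≤ 4 * ‖f‖ ^ (2 ^ j) := by nlinarith
  have claim2 : ∀ j : ℕ, ‖f‖ ^ (2 ^ j) ≤ 4 * ‖T f‖ ^ (2 ^ j) := by
    intro j
    obtain ⟨g, hg, hgn, hgT⟩ := hpow j f hf
    have hcj : (0:ℝ) < ‖f‖ ^ (2 ^ j) := by positivity
    obtain ⟨n, hn1, hn2⟩ := exists_mem_Ico_zpow hcj one_lt_two
    have hstep : (2:ℝ) ^ (n - 1) < ‖g‖ := by
      rw [hgn]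
      calc (2:ℝ) ^ (n - 1) < 2 ^ n := by
            apply zpow_lt_zpow_right₀ (by norm_num : (1:ℝ) < 2)
            omega
        _ ≤ ‖f‖ ^ (2 ^ j) := hn1
    have hge := hgez (n - 1) g hg hstep
    rw [hgT] at hge
    have h4 : (2:ℝ) ^ (n + 1) = 4 * 2 ^ (n - 1) := by
      rw [show n + 1 = (n - 1) + 2 by omega, zpow_add₀ h2ne]
      norm_num [mul_comm]
    calc ‖f‖ ^ (2 ^ j) ≤ 2 ^ (n + 1) := hn2.le
      _ = 4 * 2 ^ (n - 1) := h4
      _ ≤ 4 * ‖T f‖ ^ (2 ^ j) := by nlinarith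
  have hTpos : 0 < ‖T f‖ := by
    have := claim2 0
    simp only [pow_one, pow_zero] at this
    nlinarith [norm_nonneg (T f)]
  exact le_antisymm (aux_ratio hcpos claim1) (aux_ratio hTpos claim2)

end Core

/-- The extension of a ring isomorphism in norm between positive cones is an isometry. -/
theorem tildeT_isometry {X Y : Type*}
    [TopologicalSpace X] [LocallyCompactSpace X] [T2Space X]
    [TopologicalSpace Y] [LocallyCompactSpace Y] [T2Space Y]
    (T : C₀(X, ℝ) → C₀(Y, ℝ))
    (hbij : Set.BijOn T {f : C₀(X, ℝ) | ∀ x, 0 ≤ f x} {g : C₀(Y, ℝ) | ∀ y, 0 ≤ g y})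
    (hadd : ∀ f g : C₀(X, ℝ), (∀ x, 0 ≤ f x) → (∀ x, 0 ≤ g x) →
      ‖T (f + g)‖ = ‖T f + T g‖)
    (hmul : ∀ f g : C₀(X, ℝ), (∀ x, 0 ≤ f x) → (∀ x, 0 ≤ g x) →
      ‖T (f * g)‖ = ‖T f * T g‖) :
    ∀ f : C₀(X, ℝ), ‖tildeT T f‖ = ‖f‖ := by
  have hiso := norm_T_eq T hbij hadd hmul
  have cone0 : ∀ x, 0 ≤ (0 : C₀(X, ℝ)) x := fun x => le_of_eq rfl
  have hT0 : T 0 = 0 := by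
    have h := hadd 0 0 cone0 cone0
    rw [add_zero] at h
    rw [show T 0 + T 0 = (2 : ℝ) • T 0 from (two_smul ℝ (T 0)).symm,
      norm_smul (2 : ℝ) (T 0)] at h
    simp only [Real.norm_ofNat] at h
    have : ‖T 0‖ = 0 := by linarith
    exact norm_eq_zero.mp this
  intro f
  have hppt : ∀ x, posPart f x = max (f x) 0 := fun _ => rfl
  have hnpt : ∀ x, negPart f x = max (-(f x)) 0 := fun _ => rfl
  have hp : ∀ x, 0 ≤ posPart f x := fun x => (hppt x).symm ▸ le_max_right _ _
  have hn : ∀ x, 0 ≤ negPart f x := fun x => (hnpt x).symm ▸ le_max_right _ _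
  have prod0 : posPart f * negPart f = 0 := by
    ext x
    rw [ZeroAtInftyContinuousMap.mul_apply, hppt, hnpt, ZeroAtInftyContinuousMap.zero_apply]
    rcases le_total (f x) 0 with h | h
    · rw [max_eq_right h, zero_mul]
    · rw [max_eq_right (neg_nonpos.mpr h), mul_zero]
  have hsub : posPart f - negPart f = f := by
    ext x
    rw [ZeroAtInftyContinuousMap.sub_apply, hppt, hnpt]
    rcases le_total (f x) 0 with h | h
    · rw [max_eq_right h, max_eq_left (neg_nonneg.mpr h)]
      ring
    · rw [max_eq_left h, max_eq_right (neg_nonpos.mpr h)]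
      ring
  have Tprod : T (posPart f) * T (negPart f) = 0 := by
    have h := hmul (posPart f) (negPart f) hp hn
    rw [prod0, hT0, norm_zero] at h
    exact norm_eq_zero.mp h.symm
  calc ‖tildeT T f‖ = ‖T (posPart f) - T (negPart f)‖ := rfl
    _ = max ‖T (posPart f)‖ ‖T (negPart f)‖ :=
        aux_norm_sub_eq_max _ _ (hbij.mapsTo hp) (hbij.mapsTo hn) Tprod
    _ = max ‖posPart f‖ ‖negPart f‖ := by rw [hiso _ hp, hiso _ hn]
    _ = ‖posPart f - negPart f‖ :=
        (aux_norm_sub_eq_max _ _ hp hn prod0).symm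
    _ = ‖f‖ := by rw [hsub]
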